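/- For every integer n, the element (s₁₂·s₁₃)ⁿ of the cactus group J₃ belongs to the subgroup H generated by s₁₂ and s₂₃ if and only if n is even. -/
import Mathlib


/-- Generators of the cactus group `J₃`. -/
inductive CactusGen : Type
  | s12 | s23 | s13
  deriving DecidableEq

open FreeGroup in
/-- Relators of the cactus group `J₃`:
`s₁₂² = s₂₃² = s₁₃² = 1`, `s₁₂·s₁₃ = s₁₃·s₂₃`, `s₂₃·s₁₃ = s₁₃·s₁₂`. -/
def cactusRels : Set (FreeGroup CactusGen) :=
  { of .s12 * of .s12,
    of .s23 * of .s23,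
    of .s13 * of .s13,
    of .s12 * of .s13 * (of .s13 * of .s23)⁻¹,
    of .s23 * of .s13 * (of .s13 * of .s12)⁻¹ }

/-- The cactus group `J₃` as a presented group. -/
abbrev J3 : Type := PresentedGroup cactusRels

def s12 : J3 := PresentedGroup.of .s12
def s23 : J3 := PresentedGroup.of .s23
def s13 : J3 := PresentedGroup.of .s13

/-- The subgroup `H = J₃^{2}` of `J₃` generated by `s₁₂` and `s₂₃`. -/
def H : Subgroup J3 := Subgroup.closure {s12, s23}

lemma rel_one {r : FreeGroup CactusGen} (h : r ∈ cactusRels) :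
    (QuotientGroup.mk r : J3) = 1 :=
  (QuotientGroup.eq_one_iff r).2 (Subgroup.subset_normalClosure h)

lemma s13_sq : s13 * s13 = 1 := by
  have := rel_one (r := FreeGroup.of .s13 * FreeGroup.of .s13) (by simp [cactusRels])
  exact this

lemma key : s23 * s13 = s13 * s12 := by
  have := rel_one (r := FreeGroup.of .s23 * FreeGroup.of .s13 *
    (FreeGroup.of .s13 * FreeGroup.of .s12)⁻¹) (by simp [cactusRels])
  have h2 : s23 * s13 * (s13 * s12)⁻¹ = 1 := this
  group at h2 ⊢
  exact mul_inv_eq_one.mp (by group at h2 ⊢; exact h2)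

lemma sq_eq : (s12 * s13) * (s12 * s13) = s12 * s23 := by
  calc s12 * s13 * (s12 * s13) = s12 * (s13 * s12) * s13 := by group
    _ = s12 * (s23 * s13) * s13 := by rw [key]
    _ = s12 * s23 * (s13 * s13) := by group
    _ = s12 * s23 := by rw [s13_sq, mul_one]

def fgen : CactusGen → Multiplicative (ZMod 2)
  | .s13 => Multiplicative.ofAdd 1
  | _ => 1

lemma rels_ker : ∀ r ∈ cactusRels, FreeGroup.lift fgen r = 1 := by
  rintro r (rfl | rfl | rfl | rfl | rfl) <;>
    simp [fgen] <;> decide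

def φ : J3 →* Multiplicative (ZMod 2) := PresentedGroup.toGroup rels_ker

lemma φ_s12 : φ s12 = 1 := PresentedGroup.toGroup.of rels_ker
lemma φ_s23 : φ s23 = 1 := PresentedGroup.toGroup.of rels_ker
lemma φ_s13 : φ s13 = Multiplicative.ofAdd 1 := PresentedGroup.toGroup.of rels_ker

lemma H_le_ker : H ≤ φ.ker := by
  rw [H, Subgroup.closure_le]
  rintro x (rfl | rfl) <;> simp [MonoidHom.mem_ker, φ_s12, φ_s23]

/-- `(s₁₂·s₁₃)ⁿ ∈ H` if and only if `n` is even. -/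
theorem pow_mem_H_iff_even :
    ∀ n : ℤ, (s12 * s13) ^ n ∈ H ↔ Even n := by
  intro n
  constructor
  · intro hn
    have h1 : φ ((s12 * s13) ^ n) = 1 := H_le_ker hn
    rw [map_zpow, map_mul, φ_s12, φ_s13, one_mul] at h1
    have h2 : ((n : ZMod 2)) = 0 := by
      have := congrArg Multiplicative.toAdd h1
      simpa [← zsmul_eq_mul] using this
    obtain ⟨c, hc⟩ := (ZMod.intCast_zmod_eq_zero_iff_dvd n 2).mp h2
    exact ⟨c, by omega⟩
  · rintro ⟨k, rfl⟩
    have : (s12 * s13) ^ (k + k) = (s12 * s23) ^ k := by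
      have h2 : (s12 * s13) ^ (2 : ℤ) = s12 * s23 := by
        rw [show (2 : ℤ) = ((2 : ℕ) : ℤ) from rfl, zpow_natCast, pow_two, sq_eq]
      rw [← two_mul, zpow_mul, h2]
    rw [this]
    exact Subgroup.zpow_mem _ (Subgroup.mul_mem _
      (Subgroup.subset_closure (by simp)) (Subgroup.subset_closure (by simp))) k
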